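/- arXiv:2503.23780 — 4 statements merged into one kernel-verified Lean document; each statement's English description precedes it below -/
import Mathlib

section
/- Let s, t ∈ ℂ satisfy t² = s⁶ − 4s⁵ − 10s³ − 4s + 1, with s ≠ 1, s ≠ 0 and s² + s + 2 ≠ 0. Define S = (s+1)/(s−1) and T = (s³ − s² + s − 1 + t)/(s(s² + s + 2)). Then S ≠ 1, and moreover (S+1)/(S−1) = s and 2(−2 − 2S² + T + S²T + 2S³T)/(S−1)³ = t; that is, the map (s,t) ↦ (S,T) and the map (S,T) ↦ ((S+1)/(S−1), 2(−2 − 2S² + T + S²T + 2S³T)/(S−1)³) are mutually inverse where defined. -/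
/-- the maps `(s,t) ↦ (S,T)` and `(S,T) ↦ (s,t)` between the hyperelliptic
model of `X₀(50)` and the `(S,T)`-curve are mutually inverse where defined. -/
theorem hyperelliptic_ST_inverse (s t : ℂ)
    (h : t ^ 2 = s ^ 6 - 4 * s ^ 5 - 10 * s ^ 3 - 4 * s + 1)
    (hs1 : s ≠ 1) (hs0 : s ≠ 0) (hs2 : s ^ 2 + s + 2 ≠ 0) :
    let S : ℂ := (s + 1) / (s - 1)
    let T : ℂ := (s ^ 3 - s ^ 2 + s - 1 + t) / (s * (s ^ 2 + s + 2))
    S ≠ 1 ∧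
    (S + 1) / (S - 1) = s ∧
    2 * (-2 - 2 * S ^ 2 + T + S ^ 2 * T + 2 * S ^ 3 * T) / (S - 1) ^ 3 = t := by
  intro S T
  have hsub : s - 1 ≠ 0 := sub_ne_zero.mpr hs1
  have hS1 : S - 1 = 2 / (s - 1) := by
    show (s + 1) / (s - 1) - 1 = 2 / (s - 1)
    field_simp
    ring
  have hSne : S ≠ 1 := by
    intro hc
    rw [hc, sub_self, eq_comm, div_eq_zero_iff] at hS1
    rcases hS1 with h2 | h2
    · exact two_ne_zero h2
    · exact hsub h2
  refine ⟨hSne, ?_, ?_⟩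
  · show ((s + 1) / (s - 1) + 1) / ((s + 1) / (s - 1) - 1) = s
    rw [div_eq_iff (sub_ne_zero.mpr hSne)]
    show _ = s * ((s + 1) / (s - 1) - 1)
    field_simp
    ring
  · have hS1ne : S - 1 ≠ 0 := sub_ne_zero.mpr hSne
    have key : 2 * (-2 - 2 * S ^ 2 + T + S ^ 2 * T + 2 * S ^ 3 * T) = t * (S - 1) ^ 3 := by
      show 2 * (-2 - 2 * ((s + 1) / (s - 1)) ^ 2 + (s ^ 3 - s ^ 2 + s - 1 + t) / (s * (s ^ 2 + s + 2)) + ((s + 1) / (s - 1)) ^ 2 * ((s ^ 3 - s ^ 2 + s - 1 + t) / (s * (s ^ 2 + s + 2))) + 2 * ((s + 1) / (s - 1)) ^ 3 * ((s ^ 3 - s ^ 2 + s - 1 + t) / (s * (s ^ 2 + s + 2)))) = t * ((s + 1) / (s - 1) - 1) ^ 3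
      rw [show (s + 1) / (s - 1) - 1 = 2 / (s - 1) from hS1]
      have hs2' : s * (s + 1) + 2 ≠ 0 := by convert hs2 using 1; ring
      field_simp
      ring
    rw [key, mul_div_assoc, div_self (pow_ne_zero 3 hS1ne), mul_one]
end

section
/- For (x₁,…,x₅) ∈ ℂ⁵ with all coordinates nonzero, let T(x₁,…,x₅) = x₁x₂x₃x₄/x₅⁴, let ρ be the 5-cycle (1 2 3 4 5) and κ the transposition (1 2) acting on indices, and for a permutation σ set (σ·T)(x₁,…,x₅) = T(x_{σ(1)},…,x_{σ(5)}). Define t(x₁,…,x₅) = Σ_{i=1}^{5} (ρⁱ·T)(x₁,…,x₅) + Σ_{i=1}^{5} ((κρⁱ)·T)(x₁,…,x₅). Then t is invariant under the full symmetric group S₅: for every permutation σ of {1,…,5} and every (x₁,…,x₅) ∈ ℂ⁵ with all coordinates nonzero, t(x_{σ(1)},…,x_{σ(5)}) = t(x₁,…,x₅). -/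
open Finset

/-- `T(x₁,…,x₅) = x₁x₂x₃x₄ / x₅⁴` (zero-indexed). -/
noncomputable def bringT (x : Fin 5 → ℂ) : ℂ :=
  x 0 * x 1 * x 2 * x 3 / (x 4) ^ 4

/-- The 5-cycle `ρ = (1 2 3 4 5)`. -/
def bringRho : Equiv.Perm (Fin 5) := finRotate 5

/-- The transposition `κ = (1 2)`. -/
def bringKappa : Equiv.Perm (Fin 5) := Equiv.swap 0 1

/-- `t = Σ_{i=1}^{5} (ρⁱ·T) + Σ_{i=1}^{5} ((κρⁱ)·T)`, where `(σ·T)(x) = T(x ∘ σ)`. -/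
noncomputable def bringt (x : Fin 5 → ℂ) : ℂ :=
  (∑ i ∈ Icc 1 5, bringT (x ∘ ⇑(bringRho ^ i))) +
  (∑ i ∈ Icc 1 5, bringT (x ∘ ⇑(bringKappa * bringRho ^ i)))


private lemma bring_aux (a b c d e : ℂ) : a * b * c * d / e ^ 4 = a * b * c * d * e / e ^ 5 := by
  by_cases he : e = 0
  · simp [he]
  · field_simp

private lemma bringT_comp (x : Fin 5 → ℂ) (τ : Equiv.Perm (Fin 5)) :
    bringT (x ∘ ⇑τ) = (∏ i, x i) / x (τ 4) ^ 5 := by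
  have hp : ∏ i, x i = ∏ i, x (τ i) := (Equiv.prod_comp τ x).symm
  simp only [bringT, Function.comp, hp, Fin.prod_univ_five]
  exact bring_aux _ _ _ _ _

private lemma bringt_eq (x : Fin 5 → ℂ) :
    bringt x = 2 * ∑ j : Fin 5, (∏ i, x i) / x j ^ 5 := by
  have h1 : (bringRho ^ 1) (4 : Fin 5) = 0 := by decide
  have h2 : (bringRho ^ 2) (4 : Fin 5) = 1 := by decide
  have h3 : (bringRho ^ 3) (4 : Fin 5) = 2 := by decide
  have h4 : (bringRho ^ 4) (4 : Fin 5) = 3 := by decide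
  have h5 : (bringRho ^ 5) (4 : Fin 5) = 4 := by decide
  have k1 : (bringKappa * bringRho ^ 1) (4 : Fin 5) = 1 := by decide
  have k2 : (bringKappa * bringRho ^ 2) (4 : Fin 5) = 0 := by decide
  have k3 : (bringKappa * bringRho ^ 3) (4 : Fin 5) = 2 := by decide
  have k4 : (bringKappa * bringRho ^ 4) (4 : Fin 5) = 3 := by decide
  have k5 : (bringKappa * bringRho ^ 5) (4 : Fin 5) = 4 := by decide
  have r4 : bringRho (4 : Fin 5) = 0 := by decide
  have kb0 : bringKappa (0 : Fin 5) = 1 := by decide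
  have kb1 : bringKappa (1 : Fin 5) = 0 := by decide
  have kb2 : bringKappa (2 : Fin 5) = 2 := by decide
  have kb3 : bringKappa (3 : Fin 5) = 3 := by decide
  have kb4 : bringKappa (4 : Fin 5) = 4 := by decide
  have hIcc : Finset.Icc (1 : ℕ) 5 = {1, 2, 3, 4, 5} := rfl
  simp only [bringt, bringT_comp, hIcc]
  simp [Finset.sum_insert, Fin.sum_univ_five, h1, h2, h3, h4, h5, k1, k2, k3, k4, k5, r4, kb0, kb1, kb2, kb3, kb4]
  ring

/-- the function `t` is invariant under the full symmetric group `S₅`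
acting by permutation of the coordinates. -/
theorem bringt_S5_invariant :
    ∀ σ : Equiv.Perm (Fin 5), ∀ x : Fin 5 → ℂ, (∀ i, x i ≠ 0) →
      bringt (x ∘ ⇑σ) = bringt x := by
  intro σ x _
  rw [bringt_eq, bringt_eq]
  have hp : ∏ i, x (σ i) = ∏ i, x i := Equiv.prod_comp σ x
  have hs : ∑ j : Fin 5, (∏ i, x i) / x (σ j) ^ 5 = ∑ j : Fin 5, (∏ i, x i) / x j ^ 5 :=
    Equiv.sum_comp σ (fun j => (∏ i, x i) / x j ^ 5)
  simp only [Function.comp, hp]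
  rw [hs]
end

section
/- Let (x₁,…,x₅) ∈ ℂ⁵ satisfy x₁+⋯+x₅ = 0, x₁²+⋯+x₅² = 0 and x₁³+⋯+x₅³ = 0, with all xᵢ ≠ 0, x₁+x₂ ≠ 0 and x₁²+x₂² ≠ 0. Let t = Σ_{i=1}^{5} (ρⁱ·T) + Σ_{i=1}^{5} ((κρⁱ)·T), where T(x₁,…,x₅) = x₁x₂x₃x₄/x₅⁴, ρ = (1 2 3 4 5), κ = (1 2), and (σ·T)(x₁,…,x₅) = T(x_{σ(1)},…,x_{σ(5)}). Set v = x₂/x₁. Then t = −2g(v)/(v⁴(1+v)⁴(1+v²)⁴), where g(v) = 1 + 5v + 15v² + 35v³ + 65v⁴ + 101v⁵ + 135v⁶ + 155v⁷ + 165v⁸ + 165v⁹ + 161v¹⁰ + 165v¹¹ + 165v¹² + 155v¹³ + 135v¹⁴ + 101v¹⁵ + 65v¹⁶ + 35v¹⁷ + 15v¹⁸ + 5v¹⁹ + v²⁰. -/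
open Finset

set_option maxHeartbeats 2000000 in
/-- on Bring's curve, `t` is the explicit rational function
`−2g(v)/(v⁴(1+v)⁴(1+v²)⁴)` of `v = x₂/x₁`. -/
theorem bringt_eq_rational_function_of_v (x : Fin 5 → ℂ)
    (h1 : x 0 + x 1 + x 2 + x 3 + x 4 = 0)
    (h2 : x 0 ^ 2 + x 1 ^ 2 + x 2 ^ 2 + x 3 ^ 2 + x 4 ^ 2 = 0)
    (h3 : x 0 ^ 3 + x 1 ^ 3 + x 2 ^ 3 + x 3 ^ 3 + x 4 ^ 3 = 0)
    (hx : ∀ i, x i ≠ 0)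
    (h12 : x 0 + x 1 ≠ 0)
    (h12sq : x 0 ^ 2 + x 1 ^ 2 ≠ 0) :
    let v : ℂ := x 1 / x 0
    let g : ℂ := 1 + 5 * v + 15 * v ^ 2 + 35 * v ^ 3 + 65 * v ^ 4 + 101 * v ^ 5
      + 135 * v ^ 6 + 155 * v ^ 7 + 165 * v ^ 8 + 165 * v ^ 9 + 161 * v ^ 10
      + 165 * v ^ 11 + 165 * v ^ 12 + 155 * v ^ 13 + 135 * v ^ 14 + 101 * v ^ 15
      + 65 * v ^ 16 + 35 * v ^ 17 + 15 * v ^ 18 + 5 * v ^ 19 + v ^ 20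
    bringt x = -2 * g / (v ^ 4 * (1 + v) ^ 4 * (1 + v ^ 2) ^ 4) := by

  intro v g
  have hv : v = x 1 / x 0 := rfl
  have hg : g = 1 + 5 * v + 15 * v ^ 2 + 35 * v ^ 3 + 65 * v ^ 4 + 101 * v ^ 5
      + 135 * v ^ 6 + 155 * v ^ 7 + 165 * v ^ 8 + 165 * v ^ 9 + 161 * v ^ 10
      + 165 * v ^ 11 + 165 * v ^ 12 + 155 * v ^ 13 + 135 * v ^ 14 + 101 * v ^ 15
      + 65 * v ^ 16 + 35 * v ^ 17 + 15 * v ^ 18 + 5 * v ^ 19 + v ^ 20 := rfl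
  have ha : x 0 ≠ 0 := hx 0
  have hb : x 1 ≠ 0 := hx 1
  have hc : x 2 ≠ 0 := hx 2
  have hd : x 3 ≠ 0 := hx 3
  have he : x 4 ≠ 0 := hx 4
  have ht : bringt x = 2 * (x 1 * x 2 * x 3 * x 4 / (x 0)^4 + x 0 * x 2 * x 3 * x 4 / (x 1)^4
      + x 0 * x 1 * x 3 * x 4 / (x 2)^4 + x 0 * x 1 * x 2 * x 4 / (x 3)^4
      + x 0 * x 1 * x 2 * x 3 / (x 4)^4) := by
    unfold bringt
    rw [show (Icc 1 5 : Finset ℕ) = {1,2,3,4,5} from rfl]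
    norm_num [Finset.sum_insert, Finset.mem_insert, Finset.mem_singleton]
    simp only [bringT, Function.comp_apply,
    show (bringRho 0 : Fin 5) = 1 from rfl,
    show (bringKappa 0 : Fin 5) = 1 from rfl,
    show (bringRho 1 : Fin 5) = 2 from rfl,
    show (bringKappa 1 : Fin 5) = 0 from rfl,
    show (bringRho 2 : Fin 5) = 3 from rfl,
    show (bringKappa 2 : Fin 5) = 2 from rfl,
    show (bringRho 3 : Fin 5) = 4 from rfl,
    show (bringKappa 3 : Fin 5) = 3 from rfl,
    show (bringRho 4 : Fin 5) = 0 from rfl,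
    show (bringKappa 4 : Fin 5) = 4 from rfl,
    show ((bringRho ^ 2 : Equiv.Perm (Fin 5)) 0) = 2 from rfl,
    show ((bringKappa * bringRho ^ 2 : Equiv.Perm (Fin 5)) 0) = 2 from rfl,
    show ((bringRho ^ 2 : Equiv.Perm (Fin 5)) 1) = 3 from rfl,
    show ((bringKappa * bringRho ^ 2 : Equiv.Perm (Fin 5)) 1) = 3 from rfl,
    show ((bringRho ^ 2 : Equiv.Perm (Fin 5)) 2) = 4 from rfl,
    show ((bringKappa * bringRho ^ 2 : Equiv.Perm (Fin 5)) 2) = 4 from rfl,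
    show ((bringRho ^ 2 : Equiv.Perm (Fin 5)) 3) = 0 from rfl,
    show ((bringKappa * bringRho ^ 2 : Equiv.Perm (Fin 5)) 3) = 1 from rfl,
    show ((bringRho ^ 2 : Equiv.Perm (Fin 5)) 4) = 1 from rfl,
    show ((bringKappa * bringRho ^ 2 : Equiv.Perm (Fin 5)) 4) = 0 from rfl,
    show ((bringRho ^ 3 : Equiv.Perm (Fin 5)) 0) = 3 from rfl,
    show ((bringKappa * bringRho ^ 3 : Equiv.Perm (Fin 5)) 0) = 3 from rfl,
    show ((bringRho ^ 3 : Equiv.Perm (Fin 5)) 1) = 4 from rfl,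
    show ((bringKappa * bringRho ^ 3 : Equiv.Perm (Fin 5)) 1) = 4 from rfl,
    show ((bringRho ^ 3 : Equiv.Perm (Fin 5)) 2) = 0 from rfl,
    show ((bringKappa * bringRho ^ 3 : Equiv.Perm (Fin 5)) 2) = 1 from rfl,
    show ((bringRho ^ 3 : Equiv.Perm (Fin 5)) 3) = 1 from rfl,
    show ((bringKappa * bringRho ^ 3 : Equiv.Perm (Fin 5)) 3) = 0 from rfl,
    show ((bringRho ^ 3 : Equiv.Perm (Fin 5)) 4) = 2 from rfl,
    show ((bringKappa * bringRho ^ 3 : Equiv.Perm (Fin 5)) 4) = 2 from rfl,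
    show ((bringRho ^ 4 : Equiv.Perm (Fin 5)) 0) = 4 from rfl,
    show ((bringKappa * bringRho ^ 4 : Equiv.Perm (Fin 5)) 0) = 4 from rfl,
    show ((bringRho ^ 4 : Equiv.Perm (Fin 5)) 1) = 0 from rfl,
    show ((bringKappa * bringRho ^ 4 : Equiv.Perm (Fin 5)) 1) = 1 from rfl,
    show ((bringRho ^ 4 : Equiv.Perm (Fin 5)) 2) = 1 from rfl,
    show ((bringKappa * bringRho ^ 4 : Equiv.Perm (Fin 5)) 2) = 0 from rfl,
    show ((bringRho ^ 4 : Equiv.Perm (Fin 5)) 3) = 2 from rfl,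
    show ((bringKappa * bringRho ^ 4 : Equiv.Perm (Fin 5)) 3) = 2 from rfl,
    show ((bringRho ^ 4 : Equiv.Perm (Fin 5)) 4) = 3 from rfl,
    show ((bringKappa * bringRho ^ 4 : Equiv.Perm (Fin 5)) 4) = 3 from rfl,
    show ((bringRho ^ 5 : Equiv.Perm (Fin 5)) 0) = 0 from rfl,
    show ((bringKappa * bringRho ^ 5 : Equiv.Perm (Fin 5)) 0) = 1 from rfl,
    show ((bringRho ^ 5 : Equiv.Perm (Fin 5)) 1) = 1 from rfl,
    show ((bringKappa * bringRho ^ 5 : Equiv.Perm (Fin 5)) 1) = 0 from rfl,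
    show ((bringRho ^ 5 : Equiv.Perm (Fin 5)) 2) = 2 from rfl,
    show ((bringKappa * bringRho ^ 5 : Equiv.Perm (Fin 5)) 2) = 2 from rfl,
    show ((bringRho ^ 5 : Equiv.Perm (Fin 5)) 3) = 3 from rfl,
    show ((bringKappa * bringRho ^ 5 : Equiv.Perm (Fin 5)) 3) = 3 from rfl,
    show ((bringRho ^ 5 : Equiv.Perm (Fin 5)) 4) = 4 from rfl,
    show ((bringKappa * bringRho ^ 5 : Equiv.Perm (Fin 5)) 4) = 4 from rfl]
    ring
  -- symmetric function relations
  have hS1 : x 2 + x 3 + x 4 = -(x 0 + x 1) := by linear_combination h1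
  have hS2 : x 2 * x 3 + x 2 * x 4 + x 3 * x 4 = x 0 ^ 2 + x 0 * x 1 + x 1 ^ 2 := by
    linear_combination ((x 2 + x 3 + x 4 - x 0 - x 1) / 2) * h1 - h2 / 2
  have hS3 : x 2 * x 3 * x 4 = -((x 0 + x 1) * (x 0 ^ 2 + x 1 ^ 2)) := by
    linear_combination (1/3) * h3
      + (-((x 2 + x 3 + x 4) ^ 2 - (x 0 + x 1) * (x 2 + x 3 + x 4) + (x 0 + x 1) ^ 2) / 3
          + (x 0 ^ 2 + x 0 * x 1 + x 1 ^ 2)) * hS1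
      + (x 2 + x 3 + x 4) * hS2
  set E4 : ℂ := x 0 * x 1 * (x 0 ^ 2 + x 0 * x 1 + x 1 ^ 2)
      - (x 0 + x 1) ^ 2 * (x 0 ^ 2 + x 1 ^ 2) with hE4def
  set E5 : ℂ := -(x 0 * x 1 * (x 0 + x 1) * (x 0 ^ 2 + x 1 ^ 2)) with hE5def
  have he1 : x 0 + x 1 + x 2 + x 3 + x 4 = 0 := h1
  have he2 : x 0*x 1 + x 0*x 2 + x 0*x 3 + x 0*x 4 + x 1*x 2 + x 1*x 3 + x 1*x 4
      + x 2*x 3 + x 2*x 4 + x 3*x 4 = 0 := by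
    linear_combination (x 0 + x 1) * hS1 + hS2
  have he3 : x 0*x 1*x 2 + x 0*x 1*x 3 + x 0*x 1*x 4 + x 0*x 2*x 3 + x 0*x 2*x 4
      + x 0*x 3*x 4 + x 1*x 2*x 3 + x 1*x 2*x 4 + x 1*x 3*x 4 + x 2*x 3*x 4 = 0 := by
    linear_combination (x 0 * x 1) * hS1 + (x 0 + x 1) * hS2 + hS3
  have he4 : x 0*x 1*x 2*x 3 + x 0*x 1*x 2*x 4 + x 0*x 1*x 3*x 4 + x 0*x 2*x 3*x 4
      + x 1*x 2*x 3*x 4 = E4 := by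
    rw [hE4def]
    linear_combination (x 0 * x 1) * hS2 + (x 0 + x 1) * hS3
  have hprod : x 0 * x 1 * x 2 * x 3 * x 4 = E5 := by
    rw [hE5def]; linear_combination (x 0 * x 1) * hS3
  have hr0 : x 0 ^ 5 = E5 - E4 * x 0 := by
    linear_combination (x 0 ^ 4) * he1 - (x 0 ^ 3) * he2 + (x 0 ^ 2) * he3
      - (x 0) * he4 + hprod
  have hr1 : x 1 ^ 5 = E5 - E4 * x 1 := by
    linear_combination (x 1 ^ 4) * he1 - (x 1 ^ 3) * he2 + (x 1 ^ 2) * he3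
      - (x 1) * he4 + hprod
  have hr2 : x 2 ^ 5 = E5 - E4 * x 2 := by
    linear_combination (x 2 ^ 4) * he1 - (x 2 ^ 3) * he2 + (x 2 ^ 2) * he3
      - (x 2) * he4 + hprod
  have hr3 : x 3 ^ 5 = E5 - E4 * x 3 := by
    linear_combination (x 3 ^ 4) * he1 - (x 3 ^ 3) * he2 + (x 3 ^ 2) * he3
      - (x 3) * he4 + hprod
  have hr4 : x 4 ^ 5 = E5 - E4 * x 4 := by
    linear_combination (x 4 ^ 4) * he1 - (x 4 ^ 3) * he2 + (x 4 ^ 2) * he3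
      - (x 4) * he4 + hprod
  have key : x 1^5 * x 2^5 * x 3^5 * x 4^5 + x 0^5 * x 2^5 * x 3^5 * x 4^5
      + x 0^5 * x 1^5 * x 3^5 * x 4^5 + x 0^5 * x 1^5 * x 2^5 * x 4^5
      + x 0^5 * x 1^5 * x 2^5 * x 3^5 = E4 ^ 5 + 5 * E5 ^ 4 := by
    rw [hr0, hr1, hr2, hr3, hr4]
    linear_combination (-4 * E5^3 * E4) * he1 + (3 * E5^2 * E4^2) * he2
      + (-2 * E5 * E4^3) * he3 + (E4^4) * he4
  have ht2 : bringt x = 2 * ((x 1^5 * x 2^5 * x 3^5 * x 4^5 + x 0^5 * x 2^5 * x 3^5 * x 4^5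
      + x 0^5 * x 1^5 * x 3^5 * x 4^5 + x 0^5 * x 1^5 * x 2^5 * x 4^5
      + x 0^5 * x 1^5 * x 2^5 * x 3^5) / (x 0 * x 1 * x 2 * x 3 * x 4) ^ 4) := by
    rw [ht]
    rw [div_add_div _ _ (pow_ne_zero 4 ha) (pow_ne_zero 4 hb),
      div_add_div _ _ (mul_ne_zero (pow_ne_zero 4 ha) (pow_ne_zero 4 hb)) (pow_ne_zero 4 hc),
      div_add_div _ _ (mul_ne_zero (mul_ne_zero (pow_ne_zero 4 ha) (pow_ne_zero 4 hb)) (pow_ne_zero 4 hc)) (pow_ne_zero 4 hd),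
      div_add_div _ _ (mul_ne_zero (mul_ne_zero (mul_ne_zero (pow_ne_zero 4 ha) (pow_ne_zero 4 hb)) (pow_ne_zero 4 hc)) (pow_ne_zero 4 hd)) (pow_ne_zero 4 he)]
    rw [mul_div_assoc', mul_div_assoc',
      div_eq_div_iff (mul_ne_zero (mul_ne_zero (mul_ne_zero (mul_ne_zero (pow_ne_zero 4 ha) (pow_ne_zero 4 hb)) (pow_ne_zero 4 hc)) (pow_ne_zero 4 hd)) (pow_ne_zero 4 he))
        (pow_ne_zero 4 (mul_ne_zero (mul_ne_zero (mul_ne_zero (mul_ne_zero ha hb) hc) hd) he))]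
    ring
  have hE5ne : -(x 0 * x 1 * (x 0 + x 1) * (x 0 ^ 2 + x 1 ^ 2)) ≠ 0 :=
    neg_ne_zero.mpr (mul_ne_zero (mul_ne_zero (mul_ne_zero ha hb) h12) h12sq)
  have hw : x 1 = v * x 0 := by rw [hv]; field_simp
  have hvne : v ≠ 0 := by rw [hv]; exact div_ne_zero hb ha
  have h1v : (1 : ℂ) + v ≠ 0 := by
    rw [hv]; intro hcon; apply h12; field_simp at hcon; linear_combination hcon
  have h1v2 : (1 : ℂ) + v ^ 2 ≠ 0 := by
    rw [hv]; intro hcon; apply h12sq; field_simp at hcon; linear_combination hcon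
  rw [ht2, key, hprod, hg, hE4def, hE5def, hw]
  rw [hw] at hE5ne
  rw [mul_div_assoc']
  rw [div_eq_div_iff (pow_ne_zero 4 hE5ne)
    (mul_ne_zero (mul_ne_zero (pow_ne_zero 4 hvne) (pow_ne_zero 4 h1v)) (pow_ne_zero 4 h1v2))]
  ring
end

section
/- Let x₁, y₁, z₁ ∈ ℂ satisfy F(x₁,y₁,z₁) = x₁(y₁⁵+z₁⁵) + x₁²y₁²z₁² − x₁⁴y₁z₁ − 2y₁³z₁³ = 0. Define x = (z₁−y₁)(x₁² + x₁y₁ + y₁² + x₁z₁ + z₁²), y = (y₁−z₁)(−x₁² + x₁y₁ + y₁² + x₁z₁ + 2y₁z₁ + z₁²), z = (y₁+z₁)(−x₁² + y₁z₁), and w = x₁y₁² − y₁³ + x₁z₁² − z₁³. Then −(x²+y²) + 2(z²+w²) = 0 and x³ + xy² + 2y³ − 4xz² − 8xzw = 0. -/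
/-- the polynomial map `ψ` carries the singular plane model of
Hulek–Craig's curve into `X(Γ_B)^alg`. -/
theorem hulekCraig_to_xgammaB (x₁ y₁ z₁ : ℂ)
    (hF : x₁ * (y₁ ^ 5 + z₁ ^ 5) + x₁ ^ 2 * y₁ ^ 2 * z₁ ^ 2 - x₁ ^ 4 * y₁ * z₁
      - 2 * y₁ ^ 3 * z₁ ^ 3 = 0) :
    let x : ℂ := (z₁ - y₁) * (x₁ ^ 2 + x₁ * y₁ + y₁ ^ 2 + x₁ * z₁ + z₁ ^ 2);
    let y : ℂ := (y₁ - z₁) * (-x₁ ^ 2 + x₁ * y₁ + y₁ ^ 2 + x₁ * z₁ + 2 * y₁ * z₁ + z₁ ^ 2);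
    let z : ℂ := (y₁ + z₁) * (-x₁ ^ 2 + y₁ * z₁);
    let w : ℂ := x₁ * y₁ ^ 2 - y₁ ^ 3 + x₁ * z₁ ^ 2 - z₁ ^ 3;
    -(x ^ 2 + y ^ 2) + 2 * (z ^ 2 + w ^ 2) = 0 ∧
    x ^ 3 + x * y ^ 2 + 2 * y ^ 3 - 4 * x * z ^ 2 - 8 * x * z * w = 0 := by
  intro x y z w
  constructor
  · show -(x ^ 2 + y ^ 2) + 2 * (z ^ 2 + w ^ 2) = 0
    simp only [x, y, z, w]
    linear_combination (-8 : ℂ) * hF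
  · show x ^ 3 + x * y ^ 2 + 2 * y ^ 3 - 4 * x * z ^ 2 - 8 * x * z * w = 0
    simp only [x, y, z, w]
    linear_combination (-16 * y₁ * z₁ ^ 2 + 16 * y₁ ^ 2 * z₁ + 16 * x₁ ^ 2 * z₁
      - 16 * x₁ ^ 2 * y₁ : ℂ) * hF
end
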